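/- Let 0 < a < 1, C ≥ 0 and ε > 0 satisfy (C·ε/(1−a))·exp(C·ε/(1−a)) < 1. If f : [0, ε] → ℝ is continuous with f(0) = 0 and |f(a·v) − f(v)| ≤ C·v·|f(v)| for all v ∈ [0, ε], then f(v) = 0 for all v ∈ [0, ε]. -/

import Mathlib

/-- **vanishing lemma.** If `0 < a < 1`, `C ≥ 0`, `ε > 0` satisfy
`(Cε/(1−a))·exp(Cε/(1−a)) < 1` and `f : [0,ε] → ℝ` is continuous with `f(0) = 0` and
`|f(a·v) − f(v)| ≤ C·v·|f(v)|` for all `v ∈ [0,ε]`, then `f` vanishes identically on `[0,ε]`. -/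
theorem vanishing_lemma (a C ε : ℝ) (ha0 : 0 < a) (ha1 : a < 1) (hC : 0 ≤ C) (hε : 0 < ε)
    (hsmall : (C * ε / (1 - a)) * Real.exp (C * ε / (1 - a)) < 1)
    (f : ℝ → ℝ) (hf : ContinuousOn f (Set.Icc 0 ε)) (hf0 : f 0 = 0)
    (hrel : ∀ v ∈ Set.Icc 0 ε, |f (a * v) - f v| ≤ C * v * |f v|) :
    ∀ v ∈ Set.Icc 0 ε, f v = 0 := by
  have ha' : 0 < 1 - a := by linarith
  set q : ℝ := C * ε / (1 - a) with hq
  have hq0 : 0 ≤ q := by positivity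
  have hq1 : q < 1 := by
    have h1 : (1 : ℝ) ≤ Real.exp q := Real.one_le_exp hq0
    nlinarith
  -- maximum of |f|
  obtain ⟨x₀, hx₀, hmax⟩ := (isCompact_Icc (a := (0:ℝ)) (b := ε)).exists_isMaxOn
    (Set.nonempty_Icc.2 hε.le) (hf.abs)
  set M : ℝ := |f x₀| with hM
  have hM0 : 0 ≤ M := abs_nonneg _
  have hMle : ∀ v ∈ Set.Icc 0 ε, |f v| ≤ M := fun v hv => hmax hv
  -- membership of a^n * v
  have hmem : ∀ (n : ℕ) (v : ℝ), v ∈ Set.Icc 0 ε → a ^ n * v ∈ Set.Icc 0 ε := by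
    intro n v hv
    obtain ⟨hv0, hvε⟩ := hv
    constructor
    · positivity
    · calc a ^ n * v ≤ 1 * v := by
            apply mul_le_mul_of_nonneg_right _ hv0
            exact pow_le_one₀ ha0.le ha1.le
        _ = v := one_mul v
        _ ≤ ε := hvε
  -- iterated estimate
  have key : ∀ v ∈ Set.Icc 0 ε, ∀ n : ℕ,
      |f v - f (a ^ n * v)| ≤ M * C * v * (∑ k ∈ Finset.range n, a ^ k) := by
    intro v hv n
    induction n with
    | zero => simp
    | succ n ih =>
      have hmemn := hmem n v hv
      have hstep := hrel _ hmemn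
      have hfn : |f (a ^ n * v)| ≤ M := hMle _ hmemn
      have e1 : a * (a ^ n * v) = a ^ (n + 1) * v := by ring
      rw [e1] at hstep
      have : |f v - f (a ^ (n + 1) * v)| ≤
          |f v - f (a ^ n * v)| + |f (a ^ (n + 1) * v) - f (a ^ n * v)| := by
        have := abs_sub_le (f v) (f (a ^ n * v)) (f (a ^ (n + 1) * v))
        rw [abs_sub_comm (f (a ^ n * v))] at this
        linarith
      have h2 : |f (a ^ (n+1) * v) - f (a ^ n * v)| ≤ M * C * v * a ^ n := by
        calc |f (a ^ (n+1) * v) - f (a ^ n * v)| ≤ C * (a ^ n * v) * |f (a ^ n * v)| := hstep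
          _ ≤ C * (a ^ n * v) * M := by
              apply mul_le_mul_of_nonneg_left hfn
              have : 0 ≤ a ^ n * v := by
                have := hv.1; positivity
              positivity
          _ = M * C * v * a ^ n := by ring
      rw [Finset.sum_range_succ]
      linarith
  -- geometric sum bound
  have hgeom : ∀ n : ℕ, (∑ k ∈ Finset.range n, a ^ k) ≤ 1 / (1 - a) := by
    intro n
    have he : (∑ k ∈ Finset.range n, a ^ k) = (1 - a ^ n) / (1 - a) := by
      rw [geom_sum_eq (by linarith : a ≠ 1)]
      rw [div_eq_div_iff (by linarith) (by linarith)]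
      ring
    rw [he, div_le_div_iff₀ ha' ha']
    have hpow : 0 ≤ a ^ n := by positivity
    nlinarith
  -- limit: |f v| ≤ M * C * v / (1 - a)
  have hbound : ∀ v ∈ Set.Icc 0 ε, |f v| ≤ M * q := by
    intro v hv
    have hlim : Filter.Tendsto (fun n : ℕ => f (a ^ n * v)) Filter.atTop (nhds 0) := by
      have h1 : Filter.Tendsto (fun n : ℕ => a ^ n * v) Filter.atTop (nhds 0) := by
        have := (tendsto_pow_atTop_nhds_zero_of_lt_one ha0.le ha1).mul_const v
        simpa using this
      have hc : ContinuousWithinAt f (Set.Icc 0 ε) 0 :=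
        hf 0 ⟨le_refl 0, hε.le⟩
      have h2 : Filter.Tendsto (fun n : ℕ => a ^ n * v) Filter.atTop
          (nhdsWithin 0 (Set.Icc 0 ε)) :=
        tendsto_nhdsWithin_of_tendsto_nhds_of_eventually_within _ h1
          (Filter.Eventually.of_forall (fun n => hmem n v hv))
      have := hc.tendsto.comp h2
      simpa [hf0, Function.comp_def] using this
    have hineq : ∀ n : ℕ, |f v| ≤ |f (a ^ n * v)| + M * C * v * (1 / (1 - a)) := by
      intro n
      have h1 := key v hv n
      have h2 : |f v| - |f (a ^ n * v)| ≤ |f v - f (a ^ n * v)| := by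
        exact abs_sub_abs_le_abs_sub _ _
      have h3 : M * C * v * (∑ k ∈ Finset.range n, a ^ k) ≤ M * C * v * (1 / (1 - a)) := by
        apply mul_le_mul_of_nonneg_left (hgeom n)
        have := hv.1; positivity
      linarith
    have hlim2 : Filter.Tendsto (fun n : ℕ => |f (a ^ n * v)| + M * C * v * (1 / (1 - a)))
        Filter.atTop (nhds (M * C * v * (1 / (1 - a)))) := by
      have := (hlim.abs).add_const (M * C * v * (1 / (1 - a)))
      simpa using this
    have := ge_of_tendsto' hlim2 (fun n => (hineq n))
    calc |f v| ≤ M * C * v * (1 / (1 - a)) := this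
      _ ≤ M * C * ε * (1 / (1 - a)) := by
          have h4 : 0 ≤ M * C * (1 / (1 - a)) := by positivity
          nlinarith [hv.2]
      _ = M * q := by rw [hq]; ring
  -- conclude M = 0
  have hMzero : M = 0 := by
    have := hbound x₀ hx₀
    nlinarith
  intro v hv
  have := hMle v hv
  rw [hMzero] at this
  exact abs_nonpos_iff.mp this
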